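/- Let κ > 0, ν, α, β ∈ ℝ and μ := i(4-κ)/(4√κ). Then the identity (β√κ - αν)·sin²(z/2) + ν·sin(z/2) - 2i√κ·μ·cos(z/2)·(4α·sin(z/2) + (κ-4)) = 0 holds for all z ∈ ℍ if and only if κ = 4, ν = 0 and β = 0 (with α arbitrary). Consequently, coupling of the twisted Gaussian free field with covariance Γ_tw to the radial (δ,σ)-SLE with drift ν is possible only for κ = 4 and ν = 0. -/

import Mathlib

open Complex

lemma sinI_ne_zero : Complex.sin Complex.I ≠ 0 := by
  intro h0
  obtain ⟨k, hk⟩ := Complex.sin_eq_zero_iff.mp h0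
  have := congrArg Complex.im hk
  simp at this
lemma cosI_ne_zero : Complex.cos Complex.I ≠ 0 := by
  intro h0
  obtain ⟨k, hk⟩ := Complex.cos_eq_zero_iff.mp h0
  have := congrArg Complex.im hk
  simp at this

/-- Coupling of the twisted GFF with covariance `Γ_tw` to the radial
(δ,σ)-SLE with drift ν is possible only for κ = 4 and ν = 0. -/
theorem coupling_twisted_only_kappa_four (κ ν α β : ℝ) (hκ : 0 < κ)
    (μ : ℂ) (hμ : μ = Complex.I * (4 - (κ : ℂ)) / (4 * (Real.sqrt κ : ℂ))) :
    (∀ z : ℂ, 0 < z.im →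
      ((β : ℂ) * (Real.sqrt κ : ℂ) - (α : ℂ) * (ν : ℂ)) * Complex.sin (z / 2) ^ 2
        + (ν : ℂ) * Complex.sin (z / 2)
        - 2 * Complex.I * (Real.sqrt κ : ℂ) * μ * Complex.cos (z / 2)
            * (4 * (α : ℂ) * Complex.sin (z / 2) + ((κ : ℂ) - 4)) = 0)
    ↔ (κ = 4 ∧ ν = 0 ∧ β = 0) := by
  have hKpos : 0 < Real.sqrt κ := Real.sqrt_pos.mpr hκ
  have hK : (Real.sqrt κ : ℂ) ≠ 0 := by
    exact_mod_cast ne_of_gt hKpos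
  have hM : 2 * Complex.I * (Real.sqrt κ : ℂ) * μ = ((κ : ℂ) - 4) / 2 := by
    rw [hμ]
    field_simp
    linear_combination (4 * (4 - (κ:ℂ))) * Complex.I_sq
  constructor
  · intro h
    have hs0 : Complex.sin Complex.I ≠ 0 := sinI_ne_zero
    have hc0 : Complex.cos Complex.I ≠ 0 := cosI_ne_zero
    have hsc : Complex.sin Complex.I ^ 2 + Complex.cos Complex.I ^ 2 = 1 :=
      Complex.sin_sq_add_cos_sq _
    -- four evaluation points
    have e1 := h (2 * Complex.I) (by simp)
    have e2 := h (2 * Complex.I + 2 * (Real.pi : ℂ)) (by simp)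
    have e3 := h ((Real.pi : ℂ) + 2 * Complex.I) (by simp [Real.pi_pos])
    have e4 := h ((Real.pi : ℂ) + 2 * Complex.I + 2 * (Real.pi : ℂ)) (by simp)
    rw [hM, show (2 * Complex.I) / 2 = Complex.I by ring] at e1
    rw [hM, show (2 * Complex.I + 2 * (Real.pi:ℂ)) / 2 = Complex.I + (Real.pi:ℂ) by ring,
      Complex.sin_add_pi, Complex.cos_add_pi] at e2
    rw [hM, show ((Real.pi:ℂ) + 2 * Complex.I) / 2 = Complex.I + (Real.pi:ℂ)/2 by ring,
      Complex.sin_add_pi_div_two, Complex.cos_add_pi_div_two] at e3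
    rw [hM, show ((Real.pi:ℂ) + 2 * Complex.I + 2 * (Real.pi:ℂ)) / 2
        = (Complex.I + (Real.pi:ℂ)/2) + (Real.pi:ℂ) by ring,
      Complex.sin_add_pi, Complex.cos_add_pi,
      Complex.sin_add_pi_div_two, Complex.cos_add_pi_div_two] at e4
    -- ν = 0
    have hν : (ν : ℂ) = 0 := by
      linear_combination (Complex.sin Complex.I / 2) * e1
        - (Complex.sin Complex.I / 2) * e2
        + (Complex.cos Complex.I / 2) * e3
        - (Complex.cos Complex.I / 2) * e4
        - (ν : ℂ) * hsc
    -- κ = 4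
    have hDc : (((κ:ℂ) - 4) ^ 2 / 2) * Complex.cos Complex.I = 0 := by
      linear_combination (-(1:ℂ)/2) * e1 + (1/2) * e2 + Complex.sin Complex.I * hν
    have hκ4 : (κ : ℂ) = 4 := by
      have h1 := (mul_eq_zero.mp hDc).resolve_right hc0
      have h2 : ((κ:ℂ) - 4) ^ 2 = 0 := by linear_combination 2 * h1
      have h3 := pow_eq_zero_iff (n := 2) (by norm_num) |>.mp h2
      linear_combination h3
    -- β = 0
    have hP : (β : ℂ) * (Real.sqrt κ : ℂ) - (α : ℂ) * (ν : ℂ) = 0 := by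
      linear_combination (1/2 : ℂ) * e1 + (1/2 : ℂ) * e2 + (1/2 : ℂ) * e3
        + (1/2 : ℂ) * e4
        - ((β : ℂ) * (Real.sqrt κ : ℂ) - (α : ℂ) * (ν : ℂ)) * hsc
    have hβ : (β : ℂ) = 0 := by
      have : (β : ℂ) * (Real.sqrt κ : ℂ) = 0 := by linear_combination hP + (α:ℂ) * hν
      exact (mul_eq_zero.mp this).resolve_right hK
    refine ⟨by exact_mod_cast hκ4, by exact_mod_cast hν, by exact_mod_cast hβ⟩
  · rintro ⟨hκ4, hν0, hβ0⟩
    intro z hz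
    subst hκ4 hν0 hβ0
    rw [hμ]
    push_cast
    ring
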